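/- Let μ and ν be finite Borel measures on ℝ^d whose topological supports are compact and disjoint. Then dim_F(μ + ν) = min(dim_F μ, dim_F ν). -/

import Mathlib

open MeasureTheory

noncomputable def FT {d : ℕ} (μ : Measure (EuclideanSpace ℝ (Fin d)))
    (ξ : EuclideanSpace ℝ (Fin d)) : ℂ :=
  ∫ x, Complex.exp (-(2 * Real.pi * Complex.I * ((inner ℝ ξ x : ℝ) : ℂ))) ∂μ

/-- Fourier dimension of a finite Borel measure on `ℝ^d`. -/
noncomputable def fDim {d : ℕ} (μ : Measure (EuclideanSpace ℝ (Fin d))) : ℝ :=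
  sSup {s : ℝ | 0 ≤ s ∧ s ≤ d ∧ ∃ C : ℝ, ∀ ξ : EuclideanSpace ℝ (Fin d), ξ ≠ 0 →
    ‖FT μ ξ‖ ≤ C * ‖ξ‖ ^ (-s / 2)}

/-- Topological support of a measure. -/
def msupp {d : ℕ} (μ : Measure (EuclideanSpace ℝ (Fin d))) : Set (EuclideanSpace ℝ (Fin d)) :=
  {x | ∀ U : Set (EuclideanSpace ℝ (Fin d)), IsOpen U → x ∈ U → 0 < μ U}

open Metric Manifold FourierTransform
open scoped ContDiff

def fSet {d : ℕ} (μ : Measure (EuclideanSpace ℝ (Fin d))) : Set ℝ :=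
  {s : ℝ | 0 ≤ s ∧ s ≤ d ∧ ∃ C : ℝ, ∀ ξ : EuclideanSpace ℝ (Fin d), ξ ≠ 0 →
    ‖FT μ ξ‖ ≤ C * ‖ξ‖ ^ (-s / 2)}

lemma fDim_eq {d : ℕ} (μ : Measure (EuclideanSpace ℝ (Fin d))) : fDim μ = sSup (fSet μ) := rfl

lemma char_norm (r : ℝ) : ‖Complex.exp (-(2 * Real.pi * Complex.I * (r:ℂ)))‖ = 1 := by
  have h : -(2 * Real.pi * Complex.I * (r:ℂ)) = ((-(2 * Real.pi * r) : ℝ) : ℂ) * Complex.I := by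
    push_cast; ring
  rw [h, Complex.norm_exp_ofReal_mul_I]

lemma char_cont {d : ℕ} (ξ : EuclideanSpace ℝ (Fin d)) :
    Continuous fun x : EuclideanSpace ℝ (Fin d) =>
      Complex.exp (-(2 * Real.pi * Complex.I * ((inner ℝ ξ x : ℝ) : ℂ))) := by
  have h1 : Continuous fun x : EuclideanSpace ℝ (Fin d) => (inner ℝ ξ x : ℝ) :=
    continuous_inner.comp (continuous_const.prodMk continuous_id)
  exact Complex.continuous_exp.comp ((continuous_const.mul (Complex.continuous_ofReal.comp h1)).neg)

lemma char_integrable {d : ℕ} (σ : Measure (EuclideanSpace ℝ (Fin d))) [IsFiniteMeasure σ]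
    (ξ : EuclideanSpace ℝ (Fin d)) :
    Integrable (fun x => Complex.exp (-(2 * Real.pi * Complex.I * ((inner ℝ ξ x : ℝ) : ℂ)))) σ := by
  refine (integrable_const (1:ℝ)).mono' ((char_cont ξ).aestronglyMeasurable) ?_
  exact Filter.Eventually.of_forall fun x => le_of_eq (char_norm _)

lemma FT_add {d : ℕ} (μ ν : Measure (EuclideanSpace ℝ (Fin d)))
    [IsFiniteMeasure μ] [IsFiniteMeasure ν] (ξ : EuclideanSpace ℝ (Fin d)) :
    FT (μ + ν) ξ = FT μ ξ + FT ν ξ :=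
  integral_add_measure (char_integrable μ ξ) (char_integrable ν ξ)

lemma FT_norm_le {d : ℕ} (σ : Measure (EuclideanSpace ℝ (Fin d))) [IsFiniteMeasure σ]
    (ξ : EuclideanSpace ℝ (Fin d)) : ‖FT σ ξ‖ ≤ (σ Set.univ).toReal := by
  have := norm_integral_le_of_norm_le_const (μ := σ) (C := 1)
    (Filter.Eventually.of_forall fun x => le_of_eq (char_norm ((inner ℝ ξ x : ℝ))))
  simpa [FT, measureReal_def] using this

lemma ae_mem_msupp {d : ℕ} (μ : Measure (EuclideanSpace ℝ (Fin d))) :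
    ∀ᵐ x ∂μ, x ∈ msupp μ := by
  rw [MeasureTheory.ae_iff]
  apply measure_null_of_locally_null
  intro x hx
  simp only [Set.mem_setOf_eq, msupp] at hx
  push_neg at hx
  obtain ⟨U, hUo, hxU, hU0⟩ := hx
  exact ⟨U, mem_nhdsWithin_of_mem_nhds (hUo.mem_nhds hxU),
    nonpos_iff_eq_zero.mp hU0⟩

lemma zero_mem_fSet {d : ℕ} (σ : Measure (EuclideanSpace ℝ (Fin d))) [IsFiniteMeasure σ] :
    (0:ℝ) ∈ fSet σ := by
  refine ⟨le_refl 0, by positivity, (σ Set.univ).toReal, fun ξ hξ => ?_⟩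
  simpa using FT_norm_le σ ξ

lemma bddAbove_fSet {d : ℕ} (σ : Measure (EuclideanSpace ℝ (Fin d))) :
    BddAbove (fSet σ) := ⟨d, fun s hs => hs.2.1⟩

lemma rpow_ge_one_of_le_one {x s : ℝ} (hx : 0 < x) (hx1 : x ≤ 1) (hs : 0 ≤ s) :
    1 ≤ x ^ (-s / 2) :=
  Real.one_le_rpow_of_pos_of_le_one_of_nonpos hx hx1 (by linarith)

lemma mem_fSet_of_le {d : ℕ} {σ : Measure (EuclideanSpace ℝ (Fin d))} [IsFiniteMeasure σ]
    {s s' : ℝ} (hs : s ∈ fSet σ) (h0 : 0 ≤ s') (h1 : s' ≤ s) : s' ∈ fSet σ := by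
  obtain ⟨hs0, hsd, C, hC⟩ := hs
  refine ⟨h0, h1.trans hsd, max (max C 0) (σ Set.univ).toReal, fun ξ hξ => ?_⟩
  have hξn : 0 < ‖ξ‖ := norm_pos_iff.mpr hξ
  rcases le_or_gt ‖ξ‖ 1 with h | h
  · calc ‖FT σ ξ‖ ≤ (σ Set.univ).toReal := FT_norm_le σ ξ
    _ = (σ Set.univ).toReal * 1 := by ring
    _ ≤ max (max C 0) (σ Set.univ).toReal * ‖ξ‖ ^ (-s' / 2) := by
        apply mul_le_mul (le_max_right _ _) (rpow_ge_one_of_le_one hξn h h0) zero_le_one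
        positivity
  · calc ‖FT σ ξ‖ ≤ C * ‖ξ‖ ^ (-s / 2) := hC ξ hξ
    _ ≤ max (max C 0) (σ Set.univ).toReal * ‖ξ‖ ^ (-s' / 2) := by
        apply mul_le_mul ((le_max_left C 0).trans (le_max_left _ _))
          (Real.rpow_le_rpow_of_exponent_le h.le (by linarith))
          (Real.rpow_nonneg hξn.le _) (le_trans (le_max_right C 0) (le_max_left _ _))

lemma add_mem_fSet {d : ℕ} {μ ν : Measure (EuclideanSpace ℝ (Fin d))}
    [IsFiniteMeasure μ] [IsFiniteMeasure ν] {s : ℝ}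
    (hμ : s ∈ fSet μ) (hν : s ∈ fSet ν) : s ∈ fSet (μ + ν) := by
  obtain ⟨hs0, hsd, C₁, hC₁⟩ := hμ
  obtain ⟨-, -, C₂, hC₂⟩ := hν
  refine ⟨hs0, hsd, C₁ + C₂, fun ξ hξ => ?_⟩
  rw [FT_add]
  calc ‖FT μ ξ + FT ν ξ‖ ≤ ‖FT μ ξ‖ + ‖FT ν ξ‖ := norm_add_le _ _
  _ ≤ C₁ * ‖ξ‖ ^ (-s / 2) + C₂ * ‖ξ‖ ^ (-s / 2) := add_le_add (hC₁ ξ hξ) (hC₂ ξ hξ)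
  _ = (C₁ + C₂) * ‖ξ‖ ^ (-s / 2) := by ring

noncomputable def toSchwartz {d : ℕ} (f : EuclideanSpace ℝ (Fin d) → ℂ)
    (h1 : ContDiff ℝ ∞ f) (h2 : HasCompactSupport f) :
    SchwartzMap (EuclideanSpace ℝ (Fin d)) ℂ where
  toFun := f
  smooth' := h1
  decay' := by
    intro k n
    set F : EuclideanSpace ℝ (Fin d) → ℝ := fun x => ‖x‖ ^ k * ‖iteratedFDeriv ℝ n f x‖ with hF
    have hFc : Continuous F :=
      (continuous_norm.pow k).mul ((h1.continuous_iteratedFDeriv (by exact_mod_cast le_top)).norm)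
    have hFs : HasCompactSupport F := by
      apply HasCompactSupport.of_support_subset_isCompact (h2.iteratedFDeriv (𝕜 := ℝ) n).isCompact
      intro x hx
      simp only [F, Function.mem_support, ne_eq, mul_eq_zero, not_or] at hx
      exact subset_tsupport _ (fun h => hx.2 (by simp [h]))
    obtain ⟨C, hC⟩ := hFc.bounded_above_of_compact_support hFs
    exact ⟨C, fun x => (le_abs_self _).trans (le_of_eq (Real.norm_eq_abs _).symm) |>.trans (hC x)⟩

lemma exists_phi {d : ℕ} {K L : Set (EuclideanSpace ℝ (Fin d))}
    (hK : IsCompact K) (hL : IsCompact L) (hd : Disjoint K L) :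
    ∃ φ : EuclideanSpace ℝ (Fin d) → ℝ, ContDiff ℝ ∞ φ ∧ HasCompactSupport φ ∧
      Set.EqOn φ 1 K ∧ Set.EqOn φ 0 L := by
  obtain ⟨δ, δpos, hδ⟩ := hd.exists_thickenings hK hL.isClosed
  have hs : IsClosed (thickening δ K)ᶜ := isOpen_thickening.isClosed_compl
  have hdisj : Disjoint ((thickening δ K)ᶜ) K :=
    disjoint_compl_left.mono_right (self_subset_thickening δpos K)
  obtain ⟨f, hf0, hf1, -⟩ := exists_contMDiffMap_zero_one_of_isClosed (n := ⊤) (𝓘(ℝ, EuclideanSpace ℝ (Fin d)))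
    hs hK.isClosed hdisj
  refine ⟨f, ?_, ?_, hf1, ?_⟩
  · exact contMDiff_iff_contDiff.mp f.contMDiff
  · apply HasCompactSupport.of_support_subset_isCompact (hK.cthickening (r := δ))
    intro x hx
    by_contra hxc
    exact hx (hf0 (fun h => hxc (thickening_subset_cthickening δ K h)))
  · intro x hx
    exact hf0 (Set.disjoint_right.mp hδ (self_subset_thickening δpos L hx))


lemma FT_repr {d : ℕ} (μ ν : Measure (EuclideanSpace ℝ (Fin d)))
    [IsFiniteMeasure μ] [IsFiniteMeasure ν]
    (g : EuclideanSpace ℝ (Fin d) → ℂ) (hgc : Continuous g) {B : ℝ} (hgb : ∀ x, ‖g x‖ ≤ B)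
    (hgi : Integrable g volume) (hΨi : Integrable (𝓕 g) volume)
    (hg1 : ∀ x ∈ msupp μ, g x = 1) (hg0 : ∀ x ∈ msupp ν, g x = 0)
    (ξ : EuclideanSpace ℝ (Fin d)) :
    FT μ ξ = ∫ η, FT (μ + ν) (ξ - η) * (𝓕 g) η := by
  set σ := μ + ν with hσ
  set e : EuclideanSpace ℝ (Fin d) → EuclideanSpace ℝ (Fin d) → ℂ := fun ζ x =>
    Complex.exp (-(2 * Real.pi * Complex.I * ((inner ℝ ζ x : ℝ) : ℂ))) with he
  set w : EuclideanSpace ℝ (Fin d) → EuclideanSpace ℝ (Fin d) → ℂ := fun η x =>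
    Complex.exp (((2 * Real.pi * (inner ℝ η x : ℝ) : ℝ) : ℂ) * Complex.I) with hw
  have hw_norm : ∀ η x, ‖w η x‖ = 1 := fun η x => Complex.norm_exp_ofReal_mul_I _
  have he_norm : ∀ ζ x, ‖e ζ x‖ = 1 := fun ζ x => char_norm _
  have hew : ∀ η x, e ξ x * w η x = e (ξ - η) x := by
    intro η x
    simp only [he, hw]
    rw [← Complex.exp_add]
    congr 1
    have h1 : (inner ℝ (ξ - η) x : ℝ) = (inner ℝ ξ x : ℝ) - (inner ℝ η x : ℝ) := inner_sub_left _ _ _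
    rw [h1]
    push_cast
    ring
  -- Step A : FT μ ξ = ∫ x, e ξ x * g x ∂σ
  have hegint : ∀ (τ : Measure (EuclideanSpace ℝ (Fin d))) [IsFiniteMeasure τ],
      Integrable (fun x => e ξ x * g x) τ := by
    intro τ _
    refine (integrable_const B).mono' (((char_cont ξ).mul hgc).aestronglyMeasurable) ?_
    refine Filter.Eventually.of_forall fun x => ?_
    rw [norm_mul, he_norm, one_mul]
    exact hgb x
  have hstepA : FT μ ξ = ∫ x, e ξ x * g x ∂σ := by
    rw [hσ, integral_add_measure (hegint μ) (hegint ν)]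
    have h1 : ∫ x, e ξ x * g x ∂μ = FT μ ξ := by
      refine integral_congr_ae ?_
      filter_upwards [ae_mem_msupp μ] with x hx
      rw [hg1 x hx, mul_one]
    have h2 : ∫ x, e ξ x * g x ∂ν = 0 := by
      rw [← integral_zero (EuclideanSpace ℝ (Fin d)) ℂ (μ := ν)]
      refine integral_congr_ae ?_
      filter_upwards [ae_mem_msupp ν] with x hx
      rw [hg0 x hx, mul_zero]
    rw [h1, h2, add_zero]
  -- inversion: g x = ∫ η, w η x * 𝓕 g η
  have hinv : ∀ x, g x = ∫ η, w η x * 𝓕 g η := by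
    intro x
    conv_lhs => rw [← hgc.fourierInv_fourier_eq hgi hΨi]
    rw [Real.fourierInv_eq' (𝓕 g) x]
    simp only [hw, smul_eq_mul]
  -- Fubini
  have hFub : Integrable (Function.uncurry fun x η => e ξ x * (w η x * 𝓕 g η))
      (σ.prod volume) := by
    have hcont : Continuous fun p : EuclideanSpace ℝ (Fin d) × EuclideanSpace ℝ (Fin d) =>
        e ξ p.1 * (w p.2 p.1 * 𝓕 g p.2) := by
      have hinner : Continuous fun p : EuclideanSpace ℝ (Fin d) × EuclideanSpace ℝ (Fin d) =>
          (inner ℝ p.2 p.1 : ℝ) := continuous_inner.comp (continuous_snd.prodMk continuous_fst)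
      have hwc : Continuous fun p : EuclideanSpace ℝ (Fin d) × EuclideanSpace ℝ (Fin d) =>
          w p.2 p.1 := by
        simp only [hw]
        exact Complex.continuous_exp.comp
          ((Complex.continuous_ofReal.comp (continuous_const.mul hinner)).mul continuous_const)
      have hΨc : Continuous (𝓕 g) :=
        VectorFourier.fourierIntegral_continuous Real.continuous_fourierChar
          (by exact (innerSL ℝ).continuous₂) hgi
      exact ((char_cont ξ).comp continuous_fst).mul (hwc.mul (hΨc.comp continuous_snd))
    refine ((integrable_const (1:ℝ)).mul_prod hΨi.norm).mono' hcont.aestronglyMeasurable ?_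
    refine Filter.Eventually.of_forall fun p => ?_
    obtain ⟨x, η⟩ := p
    simp only [Function.uncurry_apply_pair]
    rw [norm_mul, norm_mul, he_norm, hw_norm]
    simp
  have hswap : ∫ x, ∫ η, e ξ x * (w η x * 𝓕 g η) ∂volume ∂σ
      = ∫ η, ∫ x, e ξ x * (w η x * 𝓕 g η) ∂σ ∂volume := integral_integral_swap hFub
  -- assemble
  rw [hstepA]
  have hB : ∫ x, e ξ x * g x ∂σ = ∫ x, ∫ η, e ξ x * (w η x * 𝓕 g η) ∂volume ∂σ := by
    refine integral_congr_ae (Filter.Eventually.of_forall fun x => ?_)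
    show e ξ x * g x = ∫ η, e ξ x * (w η x * 𝓕 g η)
    rw [integral_const_mul, ← hinv x]
  rw [hB, hswap]
  refine integral_congr_ae (Filter.Eventually.of_forall fun η => ?_)
  have : ∀ x, e ξ x * (w η x * 𝓕 g η) = e (ξ - η) x * 𝓕 g η := by
    intro x; rw [← mul_assoc, hew]
  simp_rw [this]
  rw [integral_mul_const]
  rfl

lemma toSchwartz_coe {d : ℕ} (f : EuclideanSpace ℝ (Fin d) → ℂ)
    (h1 : ContDiff ℝ ∞ f) (h2 : HasCompactSupport f) : ⇑(toSchwartz f h1 h2) = f := rfl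

set_option maxHeartbeats 2000000 in
lemma key_mem {d : ℕ} (μ ν : Measure (EuclideanSpace ℝ (Fin d)))
    [IsFiniteMeasure μ] [IsFiniteMeasure ν]
    (hμc : IsCompact (msupp μ)) (hνc : IsCompact (msupp ν))
    (hdisj : Disjoint (msupp μ) (msupp ν)) {s : ℝ} (hs : s ∈ fSet (μ + ν)) : s ∈ fSet μ := by
  obtain ⟨hs0, hsd, C0, hC0⟩ := hs
  set σ := μ + ν with hσdef
  set C := max C0 0 with hCdef
  have hCnn : 0 ≤ C := le_max_right _ _
  have hC : ∀ ξ : EuclideanSpace ℝ (Fin d), ξ ≠ 0 → ‖FT σ ξ‖ ≤ C * ‖ξ‖ ^ (-s / 2) :=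
    fun ξ hξ => (hC0 ξ hξ).trans
      (mul_le_mul_of_nonneg_right (le_max_left _ _) (Real.rpow_nonneg (norm_nonneg _) _))
  obtain ⟨φ, hφcd, hφcs, hφ1, hφ0⟩ := exists_phi hμc hνc hdisj
  set g : EuclideanSpace ℝ (Fin d) → ℂ := fun x => (φ x : ℂ) with hgdef
  have hgc : Continuous g := Complex.continuous_ofReal.comp hφcd.continuous
  have hgcd : ContDiff ℝ ∞ g := Complex.ofRealCLM.contDiff.comp hφcd
  have hgcs : HasCompactSupport g := hφcs.comp_left Complex.ofReal_zero
  set Φ := toSchwartz g hgcd hgcs with hΦdef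
  set Ψ := SchwartzMap.fourierTransformCLE ℝ _ Φ with hΨdef
  have hΨeq : ⇑Ψ = 𝓕 g := by
    rw [hΨdef]; rfl
  have hgi : Integrable g volume := hgc.integrable_of_hasCompactSupport hgcs
  have hΨi : Integrable (𝓕 g) volume := hΨeq ▸ Ψ.integrable
  obtain ⟨B, hB⟩ := hgc.bounded_above_of_compact_support hgcs
  have hrepr := FT_repr μ ν g hgc hB hgi hΨi
    (fun x hx => by simp [hgdef, hφ1 hx]) (fun x hx => by simp [hgdef, hφ0 hx])
  set M := (σ Set.univ).toReal with hMdef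
  have hMnn : 0 ≤ M := ENNReal.toReal_nonneg
  set I0 := ∫ η, ‖𝓕 g η‖ with hI0def
  set Id := ∫ η, ‖η‖ ^ d * ‖𝓕 g η‖ with hIddef
  have hI0i : Integrable (fun η => ‖𝓕 g η‖) volume := hΨi.norm
  have hIdi : Integrable (fun η => ‖η‖ ^ d * ‖𝓕 g η‖) volume := by
    have h := Ψ.integrable_pow_mul volume d
    rw [hΨeq] at h
    exact h
  set K0 := (C * I0 + M * 2 ^ d * Id) * 2 ^ (s / 2) with hK0def
  refine ⟨hs0, hsd, max K0 (μ Set.univ).toReal, fun ξ hξ => ?_⟩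
  have hξn : 0 < ‖ξ‖ := norm_pos_iff.mpr hξ
  have hrnn : (0:ℝ) ≤ ‖ξ‖ ^ (-s / 2) := Real.rpow_nonneg (norm_nonneg _) _
  rcases lt_or_ge ‖ξ‖ 1 with h1 | h1
  · calc ‖FT μ ξ‖ ≤ (μ Set.univ).toReal := FT_norm_le μ ξ
    _ = (μ Set.univ).toReal * 1 := (mul_one _).symm
    _ ≤ max K0 (μ Set.univ).toReal * ‖ξ‖ ^ (-s / 2) :=
        mul_le_mul (le_max_right _ _) (rpow_ge_one_of_le_one hξn h1.le hs0) zero_le_one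
          (le_trans ENNReal.toReal_nonneg (le_max_right _ _))
  · have hhalf : 0 < ‖ξ‖ / 2 := by linarith
    have hhnn : (0:ℝ) ≤ (‖ξ‖ / 2) ^ (-s / 2) := Real.rpow_nonneg hhalf.le _
    have hpt : ∀ η, ‖FT σ (ξ - η) * 𝓕 g η‖ ≤
        (C * ‖𝓕 g η‖ + M * 2 ^ d * (‖η‖ ^ d * ‖𝓕 g η‖)) * (‖ξ‖ / 2) ^ (-s / 2) := by
      intro η
      rw [norm_mul]
      rcases le_or_gt ‖η‖ (‖ξ‖ / 2) with hη | hη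
      · have hsub : ‖ξ‖ / 2 ≤ ‖ξ - η‖ := by
          have := norm_sub_norm_le ξ η; linarith
        have hne : ξ - η ≠ 0 := by
          intro h; rw [h, norm_zero] at hsub; linarith
        have h2 : ‖FT σ (ξ - η)‖ ≤ C * (‖ξ‖ / 2) ^ (-s / 2) :=
          (hC _ hne).trans (mul_le_mul_of_nonneg_left
            (Real.rpow_le_rpow_of_nonpos hhalf hsub (by linarith)) hCnn)
        calc ‖FT σ (ξ - η)‖ * ‖𝓕 g η‖ ≤ (C * (‖ξ‖ / 2) ^ (-s / 2)) * ‖𝓕 g η‖ :=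
            mul_le_mul_of_nonneg_right h2 (norm_nonneg _)
        _ = (C * ‖𝓕 g η‖) * (‖ξ‖ / 2) ^ (-s / 2) := by ring
        _ ≤ (C * ‖𝓕 g η‖ + M * 2 ^ d * (‖η‖ ^ d * ‖𝓕 g η‖)) * (‖ξ‖ / 2) ^ (-s / 2) := by
            apply mul_le_mul_of_nonneg_right _ hhnn
            have : (0:ℝ) ≤ M * 2 ^ d * (‖η‖ ^ d * ‖𝓕 g η‖) := by positivity
            linarith
      · have h2 : ‖FT σ (ξ - η)‖ ≤ M := FT_norm_le σ _
        have hkey : (1:ℝ) ≤ 2 ^ d * ‖η‖ ^ d * (‖ξ‖ / 2) ^ (-s / 2) := by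
          have e1 : (‖ξ‖:ℝ) ^ (d:ℝ) ≤ 2 ^ d * ‖η‖ ^ d := by
            have h3 : (‖ξ‖ / 2) ^ d ≤ ‖η‖ ^ d := pow_le_pow_left₀ hhalf.le hη.le d
            have h4 : (‖ξ‖:ℝ) ^ d = 2 ^ d * (‖ξ‖ / 2) ^ d := by
              rw [← mul_pow]; ring_nf
            have h5 : (‖ξ‖:ℝ) ^ d ≤ 2 ^ d * ‖η‖ ^ d := by
              rw [h4]
              exact mul_le_mul_of_nonneg_left h3 (by positivity)
            rw [Real.rpow_natCast]
            exact h5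
          have e2 : (‖ξ‖:ℝ) ^ (-s / 2) ≤ (‖ξ‖ / 2) ^ (-s / 2) :=
            Real.rpow_le_rpow_of_nonpos hhalf (by linarith) (by linarith)
          have e4 : (‖ξ‖:ℝ) ^ (s / 2) ≤ ‖ξ‖ ^ (d:ℝ) :=
            Real.rpow_le_rpow_of_exponent_le h1 (by linarith)
          have hz : (s / 2 + -s / 2 : ℝ) = 0 := by ring
          calc (1:ℝ) = ‖ξ‖ ^ (s / 2 + -s / 2 : ℝ) := by rw [hz, Real.rpow_zero]
          _ = ‖ξ‖ ^ (s / 2 : ℝ) * ‖ξ‖ ^ (-s / 2 : ℝ) := Real.rpow_add hξn _ _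
          _ ≤ ‖ξ‖ ^ (d:ℝ) * (‖ξ‖ / 2) ^ (-s / 2) :=
              mul_le_mul e4 e2 (Real.rpow_nonneg (norm_nonneg _) _)
                (Real.rpow_nonneg (norm_nonneg _) _)
          _ ≤ (2 ^ d * ‖η‖ ^ d) * (‖ξ‖ / 2) ^ (-s / 2) :=
              mul_le_mul_of_nonneg_right e1 hhnn
        calc ‖FT σ (ξ - η)‖ * ‖𝓕 g η‖ ≤ M * ‖𝓕 g η‖ :=
            mul_le_mul_of_nonneg_right h2 (norm_nonneg _)
        _ = (M * ‖𝓕 g η‖) * 1 := (mul_one _).symm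
        _ ≤ (M * ‖𝓕 g η‖) * (2 ^ d * ‖η‖ ^ d * (‖ξ‖ / 2) ^ (-s / 2)) :=
            mul_le_mul_of_nonneg_left hkey (by positivity)
        _ = (M * 2 ^ d * (‖η‖ ^ d * ‖𝓕 g η‖)) * (‖ξ‖ / 2) ^ (-s / 2) := by ring
        _ ≤ (C * ‖𝓕 g η‖ + M * 2 ^ d * (‖η‖ ^ d * ‖𝓕 g η‖)) * (‖ξ‖ / 2) ^ (-s / 2) := by
            apply mul_le_mul_of_nonneg_right _ hhnn
            have : (0:ℝ) ≤ C * ‖𝓕 g η‖ := by positivity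
            linarith
    have hsplit : ((‖ξ‖ / 2 : ℝ)) ^ (-s / 2) = 2 ^ (s / 2) * ‖ξ‖ ^ (-s / 2) := by
      have hneg : (-s / 2 : ℝ) = -(s / 2) := by ring
      rw [Real.div_rpow (norm_nonneg _) (by norm_num : (0:ℝ) ≤ 2), hneg,
        Real.rpow_neg (by norm_num : (0:ℝ) ≤ 2)]
      field_simp

    calc ‖FT μ ξ‖ = ‖∫ η, FT σ (ξ - η) * 𝓕 g η‖ := by rw [hrepr ξ]
    _ ≤ ∫ η, ‖FT σ (ξ - η) * 𝓕 g η‖ := norm_integral_le_integral_norm _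
    _ ≤ ∫ η, (C * ‖𝓕 g η‖ + M * 2 ^ d * (‖η‖ ^ d * ‖𝓕 g η‖)) * (‖ξ‖ / 2) ^ (-s / 2) :=
        integral_mono_of_nonneg (Filter.Eventually.of_forall fun η => norm_nonneg _)
          (((hI0i.const_mul C).add (hIdi.const_mul (M * 2 ^ d))).mul_const _)
          (Filter.Eventually.of_forall hpt)
    _ = (C * I0 + M * 2 ^ d * Id) * (‖ξ‖ / 2) ^ (-s / 2) := by
        rw [integral_mul_const]
        congr 1
        rw [integral_add (hI0i.const_mul C) (hIdi.const_mul (M * 2 ^ d)),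
          integral_const_mul, integral_const_mul]
    _ = K0 * ‖ξ‖ ^ (-s / 2) := by rw [hsplit, hK0def]; ring
    _ ≤ max K0 (μ Set.univ).toReal * ‖ξ‖ ^ (-s / 2) :=
        mul_le_mul_of_nonneg_right (le_max_left _ _) hrnn


theorem stmt6 {d : ℕ} (μ ν : Measure (EuclideanSpace ℝ (Fin d)))
    [IsFiniteMeasure μ] [IsFiniteMeasure ν]
    (hμc : IsCompact (msupp μ)) (hνc : IsCompact (msupp ν))
    (hdisj : Disjoint (msupp μ) (msupp ν)) :
    fDim (μ + ν) = min (fDim μ) (fDim ν) := by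
  rw [fDim_eq, fDim_eq, fDim_eq]
  have key₁ : fSet (μ + ν) ⊆ fSet μ := fun s hs => key_mem μ ν hμc hνc hdisj hs
  have key₂ : fSet (μ + ν) ⊆ fSet ν := by
    intro s hs
    apply key_mem ν μ hνc hμc hdisj.symm
    rwa [add_comm ν μ]
  have hne : (fSet (μ + ν)).Nonempty := ⟨0, zero_mem_fSet _⟩
  have hneμ : (fSet μ).Nonempty := ⟨0, zero_mem_fSet _⟩
  have hneν : (fSet ν).Nonempty := ⟨0, zero_mem_fSet _⟩
  apply le_antisymm
  · exact le_min (csSup_le_csSup (bddAbove_fSet μ) hne key₁)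
      (csSup_le_csSup (bddAbove_fSet ν) hne key₂)
  · by_contra hlt
    push_neg at hlt
    obtain ⟨x, hx1, hx2⟩ := exists_between hlt
    have hx0 : 0 ≤ x :=
      le_trans (le_csSup (bddAbove_fSet (μ + ν)) (zero_mem_fSet _)) hx1.le
    obtain ⟨y, hy, hxy⟩ := exists_lt_of_lt_csSup hneμ (lt_of_lt_of_le hx2 (min_le_left _ _))
    obtain ⟨z, hz, hxz⟩ := exists_lt_of_lt_csSup hneν (lt_of_lt_of_le hx2 (min_le_right _ _))
    have hxμ : x ∈ fSet μ := mem_fSet_of_le hy hx0 hxy.le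
    have hxν : x ∈ fSet ν := mem_fSet_of_le hz hx0 hxz.le
    have hxσ : x ∈ fSet (μ + ν) := add_mem_fSet hxμ hxν
    exact absurd (le_csSup (bddAbove_fSet _) hxσ) (not_le.mpr hx1)
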